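/- The inversion formula x^n = (q;q)_{n,α} ∑_{k=0}^{⌊n/2⌋} q^{-2nk+3k²} y^k h̃_{n-2k,α}(x,y|q) / ((q²;q²)_k (q;q)_{n-2k}) holds for all n ≥ 0 and all real x, y. -/

import Mathlib

open Finset

/-- q-shifted factorial (a;Q)_n with base Q -/
noncomputable def qPochGen (Q a : ℝ) (n : ℕ) : ℝ := ∏ j ∈ Finset.range n, (1 - a * Q ^ j)

/-- (q;q)_n -/
noncomputable def qPoch (q : ℝ) (n : ℕ) : ℝ := qPochGen q q n

/-- generalized q-shifted factorial (q;q)_{n,α}, via splitting formulas -/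
noncomputable def gqPoch (q α : ℝ) (n : ℕ) : ℝ :=
  qPochGen (q ^ 2) (q ^ 2) (n / 2) * qPochGen (q ^ 2) (Real.rpow q (2 * α + 2)) (n / 2 + n % 2)

/-- generalized discrete q-Hermite II polynomials -/
noncomputable def hTilde (q α x y : ℝ) (n : ℕ) : ℝ :=
  qPoch q n * ∑ k ∈ Finset.range (n / 2 + 1),
    (-1 : ℝ) ^ k * q ^ (-2 * (n : ℤ) * (k : ℤ) + (k : ℤ) * (2 * (k : ℤ) + 1)) *
      x ^ (n - 2 * k) * y ^ k / (gqPoch q α (n - 2 * k) * qPoch (q ^ 2) k)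

lemma qPochGen_pos {Q a : ℝ} (hQ0 : 0 < Q) (hQ1 : Q ≤ 1) (ha0 : 0 < a) (ha1 : a < 1) (n : ℕ) :
    0 < qPochGen Q a n := by
  unfold qPochGen
  apply Finset.prod_pos
  intro j _
  have h1 : Q ^ j ≤ 1 := pow_le_one₀ hQ0.le hQ1
  nlinarith [pow_pos hQ0 j]
lemma qPoch_pos {q : ℝ} (hq0 : 0 < q) (hq1 : q < 1) (n : ℕ) : 0 < qPoch q n :=
  qPochGen_pos hq0 hq1.le hq0 hq1 n
lemma qPoch_succ (Q : ℝ) (n : ℕ) : qPoch Q (n + 1) = qPoch Q n * (1 - Q * Q ^ n) := by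
  unfold qPoch qPochGen; rw [Finset.prod_range_succ]

/-- triangle sum swap -/
lemma tri_sum (F : ℕ → ℕ → ℝ) (N : ℕ) :
    ∑ k ∈ range (N + 1), ∑ j ∈ range (N + 1 - k), F k j
      = ∑ l ∈ range (N + 1), ∑ k ∈ range (l + 1), F k (l - k) := by
  induction N with
  | zero => simp
  | succ N ih =>
    have h1 : ∀ k ∈ range (N + 2), ∑ j ∈ range (N + 2 - k), F k j
        = ∑ j ∈ range (N + 1 - k), F k j + F k (N + 1 - k) := by
      intro k hk
      rw [mem_range] at hk
      have : N + 2 - k = (N + 1 - k) + 1 := by omega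
      rw [this, Finset.sum_range_succ]
    rw [Finset.sum_congr rfl h1, Finset.sum_add_distrib]
    rw [Finset.sum_range_succ (fun k => ∑ j ∈ range (N + 1 - k), F k j)]
    simp only [Nat.sub_self]  -- N+1-(N+1) = 0
    rw [Finset.sum_range_succ (fun l => ∑ k ∈ range (l + 1), F k (l - k))]
    simp [ih]
noncomputable def Ufun (Q : ℝ) (l k : ℕ) : ℝ :=
  if k ≤ l then 1 / (qPoch Q k * qPoch Q (l - k)) else 0
lemma qPoch_zero (Q : ℝ) : qPoch Q 0 = 1 := by unfold qPoch qPochGen; simp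
lemma pascalU {Q : ℝ} (hQ0 : 0 < Q) (hQ1 : Q < 1) (l k : ℕ) (hk : k ≤ l + 1) :
    (1 - Q * Q ^ l) * Ufun Q (l + 1) k
      = Q ^ k * Ufun Q l k + (if k = 0 then 0 else Ufun Q l (k - 1)) := by
  have hne : ∀ m, qPoch Q m ≠ 0 := fun m => (qPoch_pos hQ0 hQ1 m).ne'
  have hfac : ∀ m : ℕ, (1 : ℝ) - Q * Q ^ m ≠ 0 := by
    intro m
    have := qPoch_pos hQ0 hQ1 (m + 1)
    rw [qPoch_succ] at this
    intro h
    rw [h, mul_zero] at this; exact lt_irrefl 0 this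
  rcases Nat.eq_zero_or_pos k with hk0 | hkpos
  · subst hk0
    simp only [Ufun, if_pos (Nat.zero_le _), if_pos rfl, Nat.sub_zero, add_zero, pow_zero, ↓reduceIte]
    rw [qPoch_succ, qPoch_zero]
    have h1 := hne l; have h2 := hfac l
    field_simp
  · rcases eq_or_lt_of_le hk with hkl | hkl
    · -- k = l + 1
      subst hkl
      have h1 : ¬ (l + 1 ≤ l) := by omega
      simp only [Ufun, if_pos (le_refl _), if_neg h1, if_neg (by omega : ¬ l + 1 = 0),
        Nat.sub_self, Nat.add_sub_cancel, if_pos (Nat.sub_le _ _)]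
      rw [qPoch_succ Q l, qPoch_zero]
      have h2 := hne l; have h3 := hfac l
      field_simp
      ring
    · -- 1 ≤ k ≤ l
      have hkle : k ≤ l := by omega
      obtain ⟨m, rfl⟩ : ∃ m, k = m + 1 := ⟨k - 1, by omega⟩
      simp only [Ufun, if_pos (by omega : m + 1 ≤ l + 1), if_pos hkle,
        if_neg (by omega : ¬ m + 1 = 0), Nat.add_sub_cancel, if_pos (by omega : m ≤ l)]
      have h2 : l + 1 - (m + 1) = (l - (m + 1)) + 1 := by omega
      have h3 : l - m = (l - (m + 1)) + 1 := by omega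
      rw [h2, h3, qPoch_succ Q (l - (m+1)), qPoch_succ Q m]
      have h4 : Q ^ (m + 1) * (Q * Q ^ (l - (m + 1))) = Q * Q ^ l := by
        have e1 : Q ^ (m + 1) * (Q * Q ^ (l - (m + 1))) = Q * (Q ^ (m + 1) * Q ^ (l - (m + 1))) := by
          ring
        rw [e1, ← pow_add]
        congr 1
        congr 1
        omega
      have key : (1 : ℝ) - Q * Q ^ l
          = Q ^ (m + 1) * (1 - Q * Q ^ (l - (m + 1))) + (1 - Q * Q ^ m) := by
        linear_combination h4
      have hP := hne m; have hR := hne (l - (m + 1))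
      have hA := hfac m; have hB := hfac (l - (m + 1))
      rw [key]
      field_simp
lemma Ufun_top (Q : ℝ) (l : ℕ) : Ufun Q l (l + 1) = 0 := by
  unfold Ufun; rw [if_neg (by omega)]
lemma keySum {q : ℝ} (hq0 : 0 < q) (hq1 : q < 1) (l : ℕ) :
    ∑ k ∈ range (l + 2), (-1 : ℝ) ^ k * q ^ (k * (k - 1)) * Ufun (q ^ 2) (l + 1) k = 0 := by
  set Q := q ^ 2 with hQ
  have hQ0 : 0 < Q := by positivity
  have hQ1 : Q < 1 := by
    rw [hQ]; nlinarith
  have hfacne : (1 : ℝ) - Q * Q ^ l ≠ 0 := by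
    have := qPoch_pos hQ0 hQ1 (l + 1)
    rw [qPoch_succ] at this
    intro h
    rw [h, mul_zero] at this; exact lt_irrefl 0 this
  suffices h : (1 - Q * Q ^ l) *
      (∑ k ∈ range (l + 2), (-1 : ℝ) ^ k * q ^ (k * (k - 1)) * Ufun Q (l + 1) k) = 0 by
    rcases mul_eq_zero.mp h with h' | h'
    · exact absurd h' hfacne
    · exact h'
  rw [Finset.mul_sum]
  have hterm : ∀ k ∈ range (l + 2),
      (1 - Q * Q ^ l) * ((-1 : ℝ) ^ k * q ^ (k * (k - 1)) * Ufun Q (l + 1) k)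
        = (-1 : ℝ) ^ k * q ^ (k * (k - 1)) * (Q ^ k * Ufun Q l k)
          + (-1 : ℝ) ^ k * q ^ (k * (k - 1)) * (if k = 0 then 0 else Ufun Q l (k - 1)) := by
    intro k hk
    rw [mem_range] at hk
    have := pascalU hQ0 hQ1 l k (by omega)
    calc (1 - Q * Q ^ l) * ((-1 : ℝ) ^ k * q ^ (k * (k - 1)) * Ufun Q (l + 1) k)
        = (-1 : ℝ) ^ k * q ^ (k * (k - 1)) * ((1 - Q * Q ^ l) * Ufun Q (l + 1) k) := by ring
      _ = _ := by rw [this]; ring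
  rw [Finset.sum_congr rfl hterm, Finset.sum_add_distrib]
  have hA : ∑ k ∈ range (l + 2), (-1 : ℝ) ^ k * q ^ (k * (k - 1)) * (Q ^ k * Ufun Q l k)
      = ∑ k ∈ range (l + 1), (-1 : ℝ) ^ k * q ^ (k * (k - 1)) * (Q ^ k * Ufun Q l k) := by
    rw [Finset.sum_range_succ, Ufun_top]
    simp
  have hB : ∑ k ∈ range (l + 2),
        (-1 : ℝ) ^ k * q ^ (k * (k - 1)) * (if k = 0 then (0:ℝ) else Ufun Q l (k - 1))
      = - ∑ k ∈ range (l + 1), (-1 : ℝ) ^ k * q ^ (k * (k - 1)) * (Q ^ k * Ufun Q l k) := by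
    rw [Finset.sum_range_succ' (fun k => (-1 : ℝ) ^ k * q ^ (k * (k - 1)) *
      (if k = 0 then (0:ℝ) else Ufun Q l (k - 1)))]
    simp only [if_pos rfl, if_true, mul_zero, add_zero, if_neg (Nat.succ_ne_zero _),
      Nat.add_sub_cancel]
    rw [← Finset.sum_neg_distrib]
    apply Finset.sum_congr rfl
    intro k _
    have hexp : (k + 1) * k = k * (k - 1) + 2 * k := by
      cases k with
      | zero => simp
      | succ m => rw [Nat.succ_sub_one]; ring
    rw [hexp, pow_add, pow_succ, hQ, pow_mul]
    ring
  rw [hA, hB]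
  ring
lemma gqPoch_pos {q α : ℝ} (hq : 0 < q) (hq1 : q < 1) (hα : -1 < α) (m : ℕ) :
    0 < gqPoch q α m := by
  have hq2 : (0:ℝ) < q ^ 2 := by positivity
  have hq21 : q ^ 2 < 1 := by nlinarith
  have hr0 : 0 < Real.rpow q (2 * α + 2) := Real.rpow_pos_of_pos hq _
  have hr1 : Real.rpow q (2 * α + 2) < 1 := Real.rpow_lt_one hq.le hq1 (by linarith)
  exact mul_pos (qPochGen_pos hq2 hq21.le hq2 hq21 _) (qPochGen_pos hq2 hq21.le hr0 hr1 _)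
noncomputable def Afun (q α x y : ℝ) (n l : ℕ) : ℝ :=
  (-1 : ℝ) ^ l * q ^ (-2 * (n : ℤ) * (l : ℤ) + 2 * (l : ℤ) ^ 2 + (l : ℤ)) *
    x ^ (n - 2 * l) * y ^ l / gqPoch q α (n - 2 * l)
noncomputable def Ffun (q α x y : ℝ) (n k j : ℕ) : ℝ :=
  Afun q α x y n (k + j) * ((-1 : ℝ) ^ k * q ^ (k * (k - 1)) / (qPoch (q ^ 2) k * qPoch (q ^ 2) j))
lemma zpow_eq_div {q : ℝ} (hq : q ≠ 0) (e : ℤ) (a b : ℕ) (h : e + (b : ℤ) = (a : ℤ)) :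
    q ^ e = q ^ a / q ^ b := by
  rw [eq_div_iff (pow_ne_zero _ hq), ← zpow_natCast q a, ← zpow_natCast q b,
    ← zpow_add₀ hq, h]
lemma termEq (q α x y : ℝ) (hq : 0 < q) (hq1 : q < 1) (hα : -1 < α) (n k j : ℕ)
    (hkj : 2 * (k + j) ≤ n) :
    q ^ (-2 * (n : ℤ) * (k : ℤ) + 3 * (k : ℤ) ^ 2) * y ^ k *
      (qPoch q (n - 2 * k) *
        ((-1 : ℝ) ^ j * q ^ (-2 * ((n - 2 * k : ℕ) : ℤ) * (j : ℤ) + (j : ℤ) * (2 * (j : ℤ) + 1)) *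
          x ^ (n - 2 * k - 2 * j) * y ^ j /
          (gqPoch q α (n - 2 * k - 2 * j) * qPoch (q ^ 2) j))) /
      (qPoch (q ^ 2) k * qPoch q (n - 2 * k))
    = Ffun q α x y n k j := by
  have hq2 : (0:ℝ) < q ^ 2 := by positivity
  have hq21 : q ^ 2 < 1 := by nlinarith
  have h2k : 2 * k ≤ n := by omega
  have hidx : n - 2 * k - 2 * j = n - 2 * (k + j) := by omega
  have hcast : ((n - 2 * k : ℕ) : ℤ) = (n : ℤ) - 2 * (k : ℤ) := by omega
  rw [hidx, hcast]
  unfold Ffun Afun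
  have hP : qPoch q (n - 2 * k) ≠ 0 := (qPoch_pos hq hq1 _).ne'
  have hCk : qPoch (q ^ 2) k ≠ 0 := (qPoch_pos hq2 hq21 _).ne'
  have hCj : qPoch (q ^ 2) j ≠ 0 := (qPoch_pos hq2 hq21 _).ne'
  have hG : gqPoch q α (n - 2 * (k + j)) ≠ 0 := (gqPoch_pos hq hq1 hα _).ne'
  rw [zpow_eq_div hq.ne' _ (3 * k ^ 2) (2 * n * k) (by push_cast; ring),
    zpow_eq_div hq.ne' _ (4 * k * j + 2 * j ^ 2 + j) (2 * n * j) (by push_cast; ring),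
    zpow_eq_div hq.ne' _ (2 * (k + j) ^ 2 + (k + j)) (2 * n * (k + j)) (by push_cast; ring)]
  have hknat : q ^ (k * (k - 1)) = q ^ (k ^ 2) / q ^ k := by
    rw [eq_div_iff (pow_ne_zero _ hq.ne'), ← pow_add]
    congr 1
    rcases k with _ | m
    · simp
    · rw [Nat.succ_sub_one]; ring
  rw [hknat]
  have hqne := hq.ne'
  rcases Nat.even_or_odd k with hpk | hpk <;> rcases Nat.even_or_odd j with hpj | hpj
  · rw [hpk.neg_one_pow, hpj.neg_one_pow, (hpk.add hpj).neg_one_pow]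
    field_simp
    ring
  · rw [hpk.neg_one_pow, hpj.neg_one_pow, (Even.add_odd hpk hpj).neg_one_pow]
    field_simp
    ring
  · rw [hpk.neg_one_pow, hpj.neg_one_pow, (Odd.add_even hpk hpj).neg_one_pow]
    field_simp
    ring
  · rw [hpk.neg_one_pow, hpj.neg_one_pow, (Odd.add_odd hpk hpj).neg_one_pow]
    field_simp
    ring
lemma step1 (q α x y : ℝ) (hq : 0 < q) (hq1 : q < 1) (hα : -1 < α) (n k : ℕ)
    (hk : k ≤ n / 2) :
    q ^ (-2 * (n : ℤ) * (k : ℤ) + 3 * (k : ℤ) ^ 2) * y ^ k *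
        hTilde q α x y (n - 2 * k) / (qPoch (q ^ 2) k * qPoch q (n - 2 * k))
      = ∑ j ∈ range (n / 2 + 1 - k), Ffun q α x y n k j := by
  unfold hTilde
  have hrange : (n - 2 * k) / 2 + 1 = n / 2 + 1 - k := by omega
  rw [hrange, Finset.mul_sum, Finset.mul_sum, Finset.sum_div]
  refine Finset.sum_congr rfl fun j hj => ?_
  rw [mem_range] at hj
  exact termEq q α x y hq hq1 hα n k j (by omega)
lemma innerEval (q α x y : ℝ) (hq : 0 < q) (hq1 : q < 1) (hα : -1 < α) (n l : ℕ)
    (hl : l ≤ n / 2) :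
    ∑ k ∈ range (l + 1), Ffun q α x y n k (l - k)
      = if l = 0 then x ^ n / gqPoch q α n else 0 := by
  have hsum : ∀ k ∈ range (l + 1), Ffun q α x y n k (l - k)
      = Afun q α x y n l * ((-1 : ℝ) ^ k * q ^ (k * (k - 1)) * Ufun (q ^ 2) l k) := by
    intro k hk
    rw [mem_range] at hk
    unfold Ffun Ufun
    rw [if_pos (by omega : k ≤ l), show k + (l - k) = l from by omega]
    ring
  rw [Finset.sum_congr rfl hsum, ← Finset.mul_sum]
  rcases Nat.eq_zero_or_pos l with rfl | hlpos
  · rw [if_pos rfl]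
    simp only [Finset.sum_range_one, Ufun, if_pos (le_refl 0), Nat.sub_zero, qPoch_zero,
      pow_zero, Nat.mul_zero, Nat.zero_mul]
    unfold Afun
    norm_num
    rw [qPoch_zero]
    norm_num
  · obtain ⟨m, rfl⟩ : ∃ m, l = m + 1 := ⟨l - 1, by omega⟩
    rw [if_neg (by omega), show m + 1 + 1 = m + 2 from rfl, keySum hq hq1 m, mul_zero]
theorem hTilde_inversion_formula (q α x y : ℝ) (hq : 0 < q) (hq1 : q < 1)
    (hα : -1 < α) (n : ℕ) :
    x ^ n =
      gqPoch q α n * ∑ k ∈ Finset.range (n / 2 + 1),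
        q ^ (-2 * (n : ℤ) * (k : ℤ) + 3 * (k : ℤ) ^ 2) * y ^ k *
          hTilde q α x y (n - 2 * k) / (qPoch (q ^ 2) k * qPoch q (n - 2 * k)) := by
  have hg : gqPoch q α n ≠ 0 := (gqPoch_pos hq hq1 hα n).ne'
  have e1 : ∑ k ∈ range (n / 2 + 1),
        q ^ (-2 * (n : ℤ) * (k : ℤ) + 3 * (k : ℤ) ^ 2) * y ^ k *
          hTilde q α x y (n - 2 * k) / (qPoch (q ^ 2) k * qPoch q (n - 2 * k))
      = ∑ k ∈ range (n / 2 + 1), ∑ j ∈ range (n / 2 + 1 - k), Ffun q α x y n k j :=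
    Finset.sum_congr rfl fun k hk => step1 q α x y hq hq1 hα n k
      (by rw [mem_range] at hk; omega)
  rw [e1, tri_sum (Ffun q α x y n) (n / 2),
    Finset.sum_congr rfl (fun l hl => innerEval q α x y hq hq1 hα n l
      (by rw [mem_range] at hl; omega)),
    Finset.sum_ite_eq' (range (n / 2 + 1)) 0 (fun _ => x ^ n / gqPoch q α n),
    if_pos (mem_range.mpr (by omega)), mul_comm, div_mul_cancel₀ _ hg]
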